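/- A digraph D is strongly connected if and only if its planar dual digraph D* is acyclic, where each dual edge is oriented from the face on the left of the corresponding arc to the face on its right. -/

import Mathlib

/-- The vertex at which a dart `(a, b)` is based: the tail of arc `a` for
`b = true`, the head for `b = false`. -/
def dartVert {V A : Type} (tail head : A → V) (d : A × Bool) : V :=
  if d.2 then tail d.1 else head d.1

/-- The dart-reversing involution. -/
def flipDart {A : Type} : Equiv.Perm (A × Bool) :=
  ⟨fun d => (d.1, !d.2), fun d => (d.1, !d.2),
    fun d => by simp, fun d => by simp⟩

/-- The face setoid of a rotation system: orbits of the face permutation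
`rot ∘ flip`. -/
def faceSetoidPD {A : Type} (rot : Equiv.Perm (A × Bool)) : Setoid (A × Bool) :=
  ⟨Equiv.Perm.SameCycle ((flipDart).trans rot : Equiv.Perm (A × Bool)),
    ⟨fun x => Equiv.Perm.SameCycle.refl _ x, Equiv.Perm.SameCycle.symm,
      Equiv.Perm.SameCycle.trans⟩⟩

/-- A connected digraph embedded in the plane, given combinatorially: a digraph
`(V, A)` with `tail`/`head` maps, together with a rotation system on its darts
(each arc `a` has two darts `(a,true)` at its tail and `(a,false)` at its
head): the rotation fixes the base vertex of each dart and is transitive on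
the darts at each vertex, the underlying graph is connected, and the number of
orbits of the face permutation satisfies Euler's formula `|V| - |A| + |F| = 2`,
so that the embedding has genus 0. -/
structure PlaneDigraph (V A : Type) [Fintype V] [Fintype A] where
  tail : A → V
  head : A → V
  rot : Equiv.Perm (A × Bool)
  rot_vert : ∀ d, dartVert tail head (rot d) = dartVert tail head d
  rot_orbit : ∀ d d', dartVert tail head d = dartVert tail head d' → rot.SameCycle d d'
  connected : ∀ u v : V, Relation.ReflTransGen
    (fun x y => ∃ a : A, (tail a = x ∧ head a = y) ∨ (tail a = y ∧ head a = x)) u v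
  euler : Nat.card V + Nat.card (Quotient (faceSetoidPD rot)) = Nat.card A + 2

namespace PlaneDigraph

variable {V A : Type} [Fintype V] [Fintype A] (D : PlaneDigraph V A)

/-- The faces of a plane digraph: orbits of the face permutation. -/
def Faces : Type := Quotient (faceSetoidPD D.rot)

/-- The face on the left of an arc. -/
def leftFace (a : A) : D.Faces := Quotient.mk (faceSetoidPD D.rot) (a, true)

/-- The face on the right of an arc. -/
def rightFace (a : A) : D.Faces := Quotient.mk (faceSetoidPD D.rot) (a, false)

/-- `D` is strongly connected. -/
def StronglyConnected : Prop :=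
  ∀ u v : V, Relation.ReflTransGen (fun x y => ∃ a : A, D.tail a = x ∧ D.head a = y) u v

/-- The dual digraph `D*` is acyclic: it has no directed cycle, where each dual
arc goes from the face on the left of the corresponding arc of `D` to the face
on its right. -/
def DualAcyclic : Prop :=
  ∀ f : D.Faces, ¬ Relation.TransGen
    (fun f g => ∃ a : A, D.leftFace a = f ∧ D.rightFace a = g) f f

end PlaneDigraph

open Classical

namespace PlaneDigraph

variable {V A : Type} [Fintype V] [Fintype A] (D : PlaneDigraph V A)

noncomputable instance : Fintype D.Faces :=
  have : Finite D.Faces := Quotient.finite _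
  Fintype.ofFinite _

/-- base vertex of a dart -/
def base (d : A × Bool) : V := dartVert D.tail D.head d

/-- the face permutation -/
def facePerm : Equiv.Perm (A × Bool) := (flipDart).trans D.rot

/-- face of a dart -/
def faceOf (d : A × Bool) : D.Faces := Quotient.mk (faceSetoidPD D.rot) d

lemma flip_flip (d : A × Bool) : flipDart (flipDart d) = d := by
  simp [flipDart]

lemma faceOf_facePerm (d : A × Bool) : D.faceOf (D.facePerm d) = D.faceOf d :=
  Quot.sound ⟨-1, by
    simp only [zpow_neg, zpow_one]
    exact Equiv.symm_apply_apply _ _⟩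

lemma base_rot (d : A × Bool) : D.base (D.rot d) = D.base d := D.rot_vert d

lemma base_facePerm (d : A × Bool) : D.base (D.facePerm d) = D.base (flipDart d) :=
  D.rot_vert _

lemma base_true (a : A) : D.base (a, true) = D.tail a := rfl

lemma base_false (a : A) : D.base (a, false) = D.head a := rfl

lemma faceOf_true (a : A) : D.faceOf (a, true) = D.leftFace a := rfl

lemma faceOf_false (a : A) : D.faceOf (a, false) = D.rightFace a := rfl

include D in
lemma nonempty_A : Nonempty A := by
  by_contra h
  rw [not_nonempty_iff] at h
  have hd : IsEmpty (A × Bool) := by infer_instance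
  have hq : IsEmpty (Quotient (faceSetoidPD D.rot)) := by
    constructor
    intro f
    exact Quotient.ind (motive := fun _ => False) (fun d => hd.false d) f
  have he := D.euler
  rw [Nat.card_of_isEmpty (α := A), Nat.card_of_isEmpty (α := Quotient (faceSetoidPD D.rot))] at he
  have hV : Nat.card V = 2 := by omega
  rw [Nat.card_eq_fintype_card] at hV
  obtain ⟨u, v, huv⟩ := Fintype.exists_pair_of_one_lt_card (α := V) (by omega)
  have hc := D.connected u v
  apply huv
  induction hc with
  | refl => rfl
  | tail _ hstep ih => obtain ⟨a, _⟩ := hstep; exact (h.false a).elim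

include D in
lemma nonempty_V : Nonempty V := by
  obtain ⟨a⟩ := D.nonempty_A
  exact ⟨D.tail a⟩

lemma nonempty_Faces : Nonempty D.Faces := by
  obtain ⟨a⟩ := D.nonempty_A
  exact ⟨D.leftFace a⟩

/-- incidence matrix of `D` (arcs × vertices) -/
noncomputable def M1 : Matrix A V ℚ := fun a v =>
  (if D.head a = v then (1 : ℚ) else 0) - (if D.tail a = v then 1 else 0)

/-- face-incidence matrix of `D` (faces × arcs) -/
noncomputable def M2 : Matrix D.Faces A ℚ := fun f a =>
  (if D.leftFace a = f then (1 : ℚ) else 0) - (if D.rightFace a = f then 1 else 0)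

lemma M1_mulVec (z : V → ℚ) (a : A) :
    D.M1.mulVec z a = z (D.head a) - z (D.tail a) := by
  simp [M1, Matrix.mulVec, dotProduct, sub_mul, Finset.sum_sub_distrib,
    ite_mul, Finset.sum_ite_eq]

lemma M2_mulVec (x : A → ℚ) (f : D.Faces) :
    D.M2.mulVec x f =
      (∑ a, if D.leftFace a = f then x a else 0)
        - ∑ a, if D.rightFace a = f then x a else 0 := by
  simp [M2, Matrix.mulVec, dotProduct, sub_mul, Finset.sum_sub_distrib, ite_mul]

lemma M2T_mulVec (w : D.Faces → ℚ) (a : A) :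
    D.M2.transpose.mulVec w a = w (D.leftFace a) - w (D.rightFace a) := by
  simp [M2, Matrix.mulVec, dotProduct, Matrix.transpose_apply, sub_mul,
    Finset.sum_sub_distrib, ite_mul, Finset.sum_ite_eq]

lemma M2_mul_M1 : D.M2 * D.M1 = 0 := by
  ext f v
  rw [Matrix.mul_apply, Matrix.zero_apply]
  have key : ∑ d : A × Bool,
      (if D.faceOf d = f then (1:ℚ) else 0) *
        ((if D.base (flipDart d) = v then (1:ℚ) else 0) - (if D.base d = v then 1 else 0))
      = ∑ a, D.M2 f a * D.M1 a v := by
    rw [Fintype.sum_prod_type]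
    refine Finset.sum_congr rfl fun a _ => ?_
    rw [Fintype.sum_bool]
    have h1 : flipDart (a, true) = ((a, false) : A × Bool) := rfl
    have h2 : flipDart (a, false) = ((a, true) : A × Bool) := rfl
    rw [h1, h2, D.faceOf_true, D.faceOf_false, D.base_true, D.base_false, M1, M2]
    ring
  rw [← key]
  have reidx : ∑ d : A × Bool,
      (if D.faceOf d = f then (1:ℚ) else 0) * (if D.base (flipDart d) = v then (1:ℚ) else 0)
      = ∑ d : A × Bool,
      (if D.faceOf d = f then (1:ℚ) else 0) * (if D.base d = v then (1:ℚ) else 0) := by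
    calc ∑ d : A × Bool,
        (if D.faceOf d = f then (1:ℚ) else 0) * (if D.base (flipDart d) = v then (1:ℚ) else 0)
        = ∑ d : A × Bool,
        (if D.faceOf (D.facePerm d) = f then (1:ℚ) else 0) *
          (if D.base (D.facePerm d) = v then (1:ℚ) else 0) := by
          refine Finset.sum_congr rfl fun d _ => ?_
          rw [D.faceOf_facePerm, D.base_facePerm]
      _ = ∑ d : A × Bool,
        (if D.faceOf d = f then (1:ℚ) else 0) * (if D.base d = v then (1:ℚ) else 0) :=
          Equiv.sum_comp D.facePerm fun d =>
            (if D.faceOf d = f then (1:ℚ) else 0) * (if D.base d = v then (1:ℚ) else 0)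
  calc ∑ d : A × Bool,
      (if D.faceOf d = f then (1:ℚ) else 0) *
        ((if D.base (flipDart d) = v then (1:ℚ) else 0) - (if D.base d = v then 1 else 0))
      = (∑ d : A × Bool,
          (if D.faceOf d = f then (1:ℚ) else 0) * (if D.base (flipDart d) = v then (1:ℚ) else 0))
        - ∑ d : A × Bool,
          (if D.faceOf d = f then (1:ℚ) else 0) * (if D.base d = v then (1:ℚ) else 0) := by
        rw [← Finset.sum_sub_distrib]
        exact Finset.sum_congr rfl fun d _ => by ring
    _ = 0 := by rw [reidx, sub_self]

/-- a function constant on edges of the underlying graph is constant -/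
lemma eq_of_edge_const (z : V → ℚ) (h : ∀ a, z (D.head a) = z (D.tail a)) (u v : V) :
    z u = z v := by
  have hc := D.connected u v
  induction hc with
  | refl => rfl
  | @tail b c _ hstep ih =>
    obtain ⟨a, ⟨h1, h2⟩ | ⟨h1, h2⟩⟩ := hstep
    · rw [ih, ← h1, ← h2, h a]
    · rw [ih, ← h1, ← h2, h a]

/-- a function constant across every arc's two faces is constant (dual connectivity) -/
lemma dual_const (w : D.Faces → ℚ) (h : ∀ a, w (D.leftFace a) = w (D.rightFace a))
    (f g : D.Faces) : w f = w g := by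
  set W : A × Bool → ℚ := fun d => w (D.faceOf d) with hW
  have Wφ : ∀ d, W (D.facePerm d) = W d := fun d => by
    simp only [hW, D.faceOf_facePerm]
  have Wflip : ∀ d, W (flipDart d) = W d := by
    rintro ⟨a, b⟩
    cases b
    · show W (a, true) = W (a, false)
      simp only [hW, D.faceOf_true, D.faceOf_false]
      exact h a
    · show W (a, false) = W (a, true)
      simp only [hW, D.faceOf_true, D.faceOf_false]
      exact (h a).symm
  have Wrot : ∀ d, W (D.rot d) = W d := by
    intro d
    have hr : D.rot d = D.facePerm (flipDart d) := by
      simp [facePerm, flip_flip]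
    rw [hr, Wφ, Wflip]
  have Winv : ∀ d, W (D.rot⁻¹ d) = W d := fun d => by
    conv_rhs => rw [← (by simp : D.rot (D.rot⁻¹ d) = d), Wrot]
  have Wzpow : ∀ (k : ℤ) (d : A × Bool), W ((D.rot ^ k) d) = W d := by
    intro k
    induction k using Int.induction_on with
    | zero => intro d; simp
    | succ n ih =>
      intro d
      have : (D.rot ^ ((n : ℤ) + 1)) d = (D.rot ^ (n : ℤ)) (D.rot d) := by
        rw [zpow_add_one, Equiv.Perm.mul_apply]
      rw [this, ih, Wrot]
    | pred n ih =>
      intro d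
      have : (D.rot ^ (-(n : ℤ) - 1)) d = (D.rot ^ (-(n : ℤ))) (D.rot⁻¹ d) := by
        rw [zpow_sub_one, Equiv.Perm.mul_apply]
      rw [this, ih, Winv]
  have key : ∀ d d', D.rot.SameCycle d d' → W d = W d' := by
    rintro d d' ⟨k, hk⟩
    rw [← hk, Wzpow]
  have samevert : ∀ d d', D.base d = D.base d' → W d = W d' := fun d d' h' =>
    key _ _ (D.rot_orbit d d' h')
  have main : ∀ u v : V, ∀ e e' : A × Bool, D.base e = u → D.base e' = v → W e = W e' := by
    intro u v
    have hc := D.connected u v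
    induction hc with
    | refl => intro e e' he he'; exact samevert e e' (he.trans he'.symm)
    | @tail b c _ hstep ih =>
      intro e e' he he'
      obtain ⟨a, ⟨h1, h2⟩ | ⟨h1, h2⟩⟩ := hstep
      · have step1 : W e = W (a, true) := ih e (a, true) he (by rw [D.base_true, h1])
        have step2 : W (a, true) = W (a, false) := (Wflip (a, true)).symm
        have step3 : W (a, false) = W e' := samevert _ _ (by rw [D.base_false, h2, he'])
        rw [step1, step2, step3]
      · have step1 : W e = W (a, false) := ih e (a, false) he (by rw [D.base_false, h2])
        have step2 : W (a, false) = W (a, true) := Wflip (a, true)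
        have step3 : W (a, true) = W e' := samevert _ _ (by rw [D.base_true, h1]; rw [he'])
        rw [step1, step2, step3]
  obtain ⟨d, hd⟩ := Quotient.exists_rep f
  obtain ⟨d', hd'⟩ := Quotient.exists_rep g
  have : W d = W d' := main (D.base d) (D.base d') d d' rfl rfl
  simpa only [hW, faceOf, hd, hd'] using this

end PlaneDigraph

/-- the submodule of constant functions has dimension 1 -/
lemma finrank_const_submodule {ι : Type} [Fintype ι] [Nonempty ι] (p : Submodule ℚ (ι → ℚ))
    (hmem : ∀ z ∈ p, ∀ i j : ι, z i = z j) (hconst : ∀ c : ℚ, (fun _ => c) ∈ p) :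
    Module.finrank ℚ p = 1 := by
  have hp : p = LinearMap.range (LinearMap.pi fun _ : ι => (LinearMap.id : ℚ →ₗ[ℚ] ℚ)) := by
    ext z
    constructor
    · intro hz
      exact ⟨z (Classical.arbitrary ι), funext fun i => hmem z hz (Classical.arbitrary ι) i⟩
    · rintro ⟨c, rfl⟩
      exact hconst c
  rw [hp, LinearMap.finrank_range_of_inj, Module.finrank_self]
  intro c c' hcc
  exact congrFun hcc (Classical.arbitrary ι)

namespace PlaneDigraph

variable {V A : Type} [Fintype V] [Fintype A] (D : PlaneDigraph V A)

lemma euler' : Fintype.card V + Fintype.card D.Faces = Fintype.card A + 2 := by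
  have he := D.euler
  rw [Nat.card_eq_fintype_card (α := V), Nat.card_eq_fintype_card (α := A)] at he
  rw [show Fintype.card D.Faces = Nat.card D.Faces from (Nat.card_eq_fintype_card).symm]
  exact he

lemma exists_potential (y : A → ℚ) (hy : D.M2.mulVec y = 0) :
    ∃ z : V → ℚ, ∀ a, y a = z (D.head a) - z (D.tail a) := by
  have hVne := D.nonempty_V
  have hFne := D.nonempty_Faces
  -- kernel of M1.mulVecLin is the constants
  have hker1 : Module.finrank ℚ (LinearMap.ker D.M1.mulVecLin) = 1 := by
    apply finrank_const_submodule
    · intro z hz i j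
      refine D.eq_of_edge_const z (fun a => ?_) i j
      have := congrFun (LinearMap.mem_ker.mp hz) a
      rw [Matrix.mulVecLin_apply, D.M1_mulVec] at this
      simp only [Pi.zero_apply] at this
      linarith
    · intro c
      rw [LinearMap.mem_ker]
      funext a
      rw [Matrix.mulVecLin_apply, D.M1_mulVec]
      simp
  have hrank1 : Module.finrank ℚ (LinearMap.range D.M1.mulVecLin) + 1 = Fintype.card V := by
    have h := LinearMap.finrank_range_add_finrank_ker D.M1.mulVecLin
    rwa [hker1, Module.finrank_pi] at h
  -- kernel of M2ᵀ.mulVecLin is the constants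
  have hker2T : Module.finrank ℚ (LinearMap.ker D.M2.transpose.mulVecLin) = 1 := by
    apply finrank_const_submodule
    · intro w hw i j
      refine D.dual_const w (fun a => ?_) i j
      have := congrFun (LinearMap.mem_ker.mp hw) a
      rw [Matrix.mulVecLin_apply, D.M2T_mulVec] at this
      simp only [Pi.zero_apply] at this
      linarith
    · intro c
      rw [LinearMap.mem_ker]
      funext a
      rw [Matrix.mulVecLin_apply, D.M2T_mulVec]
      simp
  have hrank2T : Module.finrank ℚ (LinearMap.range D.M2.transpose.mulVecLin) + 1
      = Fintype.card D.Faces := by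
    have h := LinearMap.finrank_range_add_finrank_ker D.M2.transpose.mulVecLin
    rwa [hker2T, Module.finrank_pi] at h
  have hrT : Module.finrank ℚ (LinearMap.range D.M2.transpose.mulVecLin)
      = Module.finrank ℚ (LinearMap.range D.M2.mulVecLin) :=
    Matrix.rank_transpose D.M2
  have hrn2 : Module.finrank ℚ (LinearMap.range D.M2.mulVecLin)
      + Module.finrank ℚ (LinearMap.ker D.M2.mulVecLin) = Fintype.card A := by
    have h := LinearMap.finrank_range_add_finrank_ker D.M2.mulVecLin
    rwa [Module.finrank_pi] at h
  have heuler := D.euler'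
  have hVpos : 1 ≤ Fintype.card V := Fintype.card_pos
  -- range M1 ⊆ ker M2 and equality of dimensions
  have hsub : LinearMap.range D.M1.mulVecLin ≤ LinearMap.ker D.M2.mulVecLin := by
    rintro _ ⟨z, rfl⟩
    rw [LinearMap.mem_ker, ← LinearMap.comp_apply, ← Matrix.mulVecLin_mul, D.M2_mul_M1]
    simp
  have heq : LinearMap.range D.M1.mulVecLin = LinearMap.ker D.M2.mulVecLin := by
    apply Submodule.eq_of_le_of_finrank_le hsub
    omega
  have hy' : y ∈ LinearMap.range D.M1.mulVecLin := by
    rw [heq, LinearMap.mem_ker]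
    funext f
    rw [Matrix.mulVecLin_apply]
    exact congrFun hy f
  obtain ⟨z, hz⟩ := hy'
  refine ⟨z, fun a => ?_⟩
  rw [← congrFun hz a, Matrix.mulVecLin_apply, D.M1_mulVec]

end PlaneDigraph

namespace PlaneDigraph

variable {V A : Type} [Fintype V] [Fintype A] (D : PlaneDigraph V A)

/-- a dual walk yields a nonnegative vector with telescoping boundary -/
lemma dual_walk_vector {f g : D.Faces}
    (h : Relation.TransGen (fun f g => ∃ a : A, D.leftFace a = f ∧ D.rightFace a = g) f g) :
    ∃ y : A → ℚ, (∀ a, 0 ≤ y a) ∧ (∃ a, 1 ≤ y a) ∧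
      D.M2.mulVec y = fun f' => (if f = f' then (1:ℚ) else 0) - (if g = f' then 1 else 0) := by
  induction h with
  | @single b hb =>
    obtain ⟨a, hl, hr⟩ := hb
    refine ⟨Pi.single a 1, fun a' => ?_, ⟨a, by simp⟩, ?_⟩
    · rcases eq_or_ne a' a with rfl | hne
      · simp
      · simp [Pi.single_apply, hne]
    · funext f'
      rw [D.M2_mulVec]
      have e1 : (∑ a', if D.leftFace a' = f' then Pi.single a (1:ℚ) a' else 0)
          = if D.leftFace a = f' then (1:ℚ) else 0 := by
        rw [Finset.sum_eq_single a]
        · simp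
        · intro b' _ hb'
          simp [Pi.single_apply, hb']
        · intro hb'
          exact absurd (Finset.mem_univ a) hb'
      have e2 : (∑ a', if D.rightFace a' = f' then Pi.single a (1:ℚ) a' else 0)
          = if D.rightFace a = f' then (1:ℚ) else 0 := by
        rw [Finset.sum_eq_single a]
        · simp
        · intro b' _ hb'
          simp [Pi.single_apply, hb']
        · intro hb'
          exact absurd (Finset.mem_univ a) hb'
      rw [e1, e2, hl, hr]
  | @tail b c hfb hbc ih =>
    obtain ⟨y, hy0, ⟨a₀, ha₀⟩, hyv⟩ := ih
    obtain ⟨a, hl, hr⟩ := hbc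
    refine ⟨y + Pi.single a 1, fun a' => ?_, ⟨a₀, ?_⟩, ?_⟩
    · have : (0:ℚ) ≤ Pi.single (M := fun _ : A => ℚ) a 1 a' := by
        rcases eq_or_ne a' a with rfl | hne
        · simp
        · simp [Pi.single_apply, hne]
      have := hy0 a'
      simp only [Pi.add_apply]
      linarith
    · have : (0:ℚ) ≤ Pi.single (M := fun _ : A => ℚ) a 1 a₀ := by
        rcases eq_or_ne a₀ a with rfl | hne
        · simp
        · simp [Pi.single_apply, hne]
      simp only [Pi.add_apply]
      linarith
    · rw [Matrix.mulVec_add, hyv]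
      have hsingle : D.M2.mulVec (Pi.single a 1)
          = fun f' => (if b = f' then (1:ℚ) else 0) - (if c = f' then 1 else 0) := by
        funext f'
        rw [D.M2_mulVec]
        have e1 : (∑ a', if D.leftFace a' = f' then Pi.single a (1:ℚ) a' else 0)
            = if D.leftFace a = f' then (1:ℚ) else 0 := by
          rw [Finset.sum_eq_single a]
          · simp
          · intro b' _ hb'
            simp [Pi.single_apply, hb']
          · intro hb'
            exact absurd (Finset.mem_univ a) hb'
        have e2 : (∑ a', if D.rightFace a' = f' then Pi.single a (1:ℚ) a' else 0)
            = if D.rightFace a = f' then (1:ℚ) else 0 := by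
          rw [Finset.sum_eq_single a]
          · simp
          · intro b' _ hb'
            simp [Pi.single_apply, hb']
          · intro hb'
            exact absurd (Finset.mem_univ a) hb'
        rw [e1, e2, hl, hr]
      rw [hsingle]
      funext f'
      simp only [Pi.add_apply]
      ring

theorem sc_implies_acyclic (hSC : D.StronglyConnected) : D.DualAcyclic := by
  intro f hcyc
  obtain ⟨y, hy0, ⟨a₀, ha₀⟩, hyv⟩ := D.dual_walk_vector hcyc
  have hyv0 : D.M2.mulVec y = 0 := by
    rw [hyv]; funext f'; simp
  obtain ⟨z, hz⟩ := D.exists_potential y hyv0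
  have mono : ∀ a, z (D.tail a) ≤ z (D.head a) := by
    intro a
    have := hy0 a
    rw [hz a] at this
    linarith
  have monopath : ∀ u v : V,
      Relation.ReflTransGen (fun x y => ∃ a : A, D.tail a = x ∧ D.head a = y) u v →
      z u ≤ z v := by
    intro u v hp
    induction hp with
    | refl => exact le_refl _
    | @tail b c _ hstep ih =>
      obtain ⟨a, h1, h2⟩ := hstep
      have := mono a
      rw [h1, h2] at this
      linarith
  have h1 : z (D.tail a₀) + 1 ≤ z (D.head a₀) := by
    have := ha₀
    rw [hz a₀] at this
    linarith
  have h2 := monopath _ _ (hSC (D.head a₀) (D.tail a₀))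
  linarith

theorem acyclic_implies_sc (hAc : D.DualAcyclic) : D.StronglyConnected := by
  intro u v
  by_contra hreach
  set S : Set V := {x | Relation.ReflTransGen
    (fun x y => ∃ a : A, D.tail a = x ∧ D.head a = y) u x} with hS
  have hclosed : ∀ a : A, D.tail a ∈ S → D.head a ∈ S := fun a h =>
    Relation.ReflTransGen.tail h ⟨a, rfl, rfl⟩
  set z : V → ℚ := fun x => if x ∈ S then (1:ℚ) else 0 with hz
  set y : A → ℚ := D.M1.mulVec z with hy
  have hya : ∀ a, y a = z (D.head a) - z (D.tail a) := fun a => D.M1_mulVec z a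
  have hy0 : ∀ a, 0 ≤ y a := by
    intro a
    rw [hya a]
    by_cases ht : D.tail a ∈ S
    · simp [hz, ht, hclosed a ht]
    · by_cases hh : D.head a ∈ S <;> simp [hz, ht, hh]
  have hM2y : D.M2.mulVec y = 0 := by
    have : y = D.M1.mulVecLin z := by rw [hy, Matrix.mulVecLin_apply]
    rw [this, show D.M2.mulVec (D.M1.mulVecLin z) = D.M2.mulVecLin (D.M1.mulVecLin z) from
      (Matrix.mulVecLin_apply _ _).symm, ← LinearMap.comp_apply, ← Matrix.mulVecLin_mul,
      D.M2_mul_M1]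
    simp
  -- a crossing arc exists
  have hcross : ∃ a₀ : A, D.head a₀ ∈ S ∧ D.tail a₀ ∉ S := by
    have hv : v ∉ S := hreach
    have hu : u ∈ S := Relation.ReflTransGen.refl
    have claim : ∀ x w : V, Relation.ReflTransGen
        (fun x y => ∃ a : A, (D.tail a = x ∧ D.head a = y) ∨ (D.tail a = y ∧ D.head a = x)) x w →
        x ∈ S → w ∉ S → ∃ a₀ : A, D.head a₀ ∈ S ∧ D.tail a₀ ∉ S := by
      intro x w hp
      induction hp with
      | refl => intro hx hx'; exact absurd hx hx'
      | @tail b c _ hstep ih =>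
        intro hx hc
        by_cases hb : b ∈ S
        · obtain ⟨a, ⟨h1, h2⟩ | ⟨h1, h2⟩⟩ := hstep
          · rw [← h1] at hb
            have := hclosed a hb
            rw [h2] at this
            exact absurd this hc
          · exact ⟨a, by rw [h2]; exact hb, by rw [h1]; exact hc⟩
        · exact ih hx hb
    exact claim u v (D.connected u v) hu hv
  obtain ⟨a₀, hh, ht⟩ := hcross
  have hpos : 0 < y a₀ := by
    rw [hya a₀]
    simp [hz, hh, ht]
  -- from any positive arc, find a successor
  have step : ∀ a : A, 0 < y a → ∃ a' : A, 0 < y a' ∧ D.leftFace a' = D.rightFace a := by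
    intro a ha
    have h0 := congrFun hM2y (D.rightFace a)
    rw [D.M2_mulVec, Pi.zero_apply, sub_eq_zero] at h0
    have hge : y a ≤ ∑ a', if D.rightFace a' = D.rightFace a then y a' else 0 := by
      have := Finset.single_le_sum (f := fun a' => if D.rightFace a' = D.rightFace a then y a' else 0)
        (fun a' _ => by split <;> [exact hy0 a'; exact le_refl 0]) (Finset.mem_univ a)
      simpa using this
    have hlpos : 0 < ∑ a', if D.leftFace a' = D.rightFace a then y a' else 0 := by
      rw [h0]; linarith
    obtain ⟨a', _, ha'⟩ := Finset.exists_ne_zero_of_sum_ne_zero (ne_of_gt hlpos)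
    by_cases hl : D.leftFace a' = D.rightFace a
    · refine ⟨a', ?_, hl⟩
      rw [if_pos hl] at ha'
      exact lt_of_le_of_ne (hy0 a') (Ne.symm ha')
    · rw [if_neg hl] at ha'
      exact absurd rfl ha'
  choose nxt hnpos hnleft using step
  let seq : ℕ → {a : A // 0 < y a} := fun n =>
    n.rec ⟨a₀, hpos⟩ (fun _ p => ⟨nxt p.1 p.2, hnpos p.1 p.2⟩)
  have hseq : ∀ n, (seq (n+1)).1 = nxt (seq n).1 (seq n).2 := fun n => rfl
  have hlink : ∀ n, D.leftFace (seq (n+1)).1 = D.rightFace (seq n).1 := by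
    intro n
    rw [hseq n]
    exact hnleft (seq n).1 (seq n).2
  set g : ℕ → D.Faces := fun n => D.leftFace (seq n).1 with hg
  have hstep' : ∀ n, Relation.TransGen
      (fun f g => ∃ a : A, D.leftFace a = f ∧ D.rightFace a = g) (g n) (g (n+1)) := by
    intro n
    exact Relation.TransGen.single ⟨(seq n).1, rfl, (hlink n).symm⟩
  have htrans : ∀ m k : ℕ, Relation.TransGen
      (fun f g => ∃ a : A, D.leftFace a = f ∧ D.rightFace a = g) (g m) (g (m+k+1)) := by
    intro m k
    induction k with
    | zero => exact hstep' m
    | succ k ih => exact Relation.TransGen.trans ih (hstep' (m+k+1))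
  obtain ⟨m, n, hmn, hgeq⟩ := Finite.exists_ne_map_eq_of_infinite g
  rcases lt_or_gt_of_ne hmn with hlt | hlt
  · have := htrans m (n - m - 1)
    rw [show m + (n - m - 1) + 1 = n by omega, hgeq] at this
    exact hAc (g n) this
  · have := htrans n (m - n - 1)
    rw [show n + (m - n - 1) + 1 = m by omega, ← hgeq] at this
    exact hAc (g m) this

end PlaneDigraph

/-- A connected plane digraph `D` is strongly connected if and
only if its planar dual digraph `D*` (each dual edge oriented from the face on
the left of the corresponding arc to the face on its right) is acyclic. -/
theorem stronglyConnected_iff_dual_acyclic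
    {V A : Type} [Fintype V] [Fintype A] (D : PlaneDigraph V A) :
    D.StronglyConnected ↔ D.DualAcyclic := by
  exact ⟨D.sc_implies_acyclic, D.acyclic_implies_sc⟩
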